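/- For any integer a and any positive integer m, m divides (a^m − a) · (m−1)!. -/

import Mathlib

lemma key_dvd (m k : ℕ) (hk1 : 1 ≤ k) (hkm : k < m) :
    m ∣ Nat.choose m k * Nat.factorial (m - 1) := by
  have hk : k ∣ Nat.factorial (m - 1) := Nat.dvd_factorial hk1 (by omega)
  obtain ⟨c, hc⟩ := hk
  have hmul : Nat.choose m k * k = m * Nat.choose (m - 1) (k - 1) := by
    have h := Nat.add_one_mul_choose_eq (m - 1) (k - 1)
    have h1 : m - 1 + 1 = m := by omega
    have h2 : k - 1 + 1 = k := by omega
    rw [h1, h2] at h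
    omega
  refine ⟨Nat.choose (m - 1) (k - 1) * c, ?_⟩
  rw [hc, ← mul_assoc, hmul, mul_assoc]

lemma step_dvd (a : ℤ) (m : ℕ) (hm : 0 < m) :
    (m : ℤ) ∣ (((a + 1) ^ m - (a + 1)) - (a ^ m - a)) * (Nat.factorial (m - 1) : ℤ) := by
  have hbin : (a + 1) ^ m = ∑ k ∈ Finset.range (m + 1), a ^ k * (Nat.choose m k : ℤ) := by
    rw [add_pow]
    simp
  have hsplit : (a + 1) ^ m - (a + 1) - (a ^ m - a)
      = ∑ k ∈ Finset.Ico 1 m, a ^ k * (Nat.choose m k : ℤ) := by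
    rw [hbin, Finset.sum_range_succ, Nat.choose_self]
    have : Finset.range m = insert 0 (Finset.Ico 1 m) := by
      ext x
      simp [Finset.mem_Ico]
      omega
    rw [this, Finset.sum_insert (by simp)]
    simp
    ring
  rw [hsplit, Finset.sum_mul]
  refine Finset.dvd_sum fun k hk => ?_
  simp only [Finset.mem_Ico] at hk
  obtain ⟨c, hc⟩ := key_dvd m k hk.1 hk.2
  refine ⟨a ^ k * c, ?_⟩
  have hcast : ((Nat.choose m k : ℤ)) * (Nat.factorial (m - 1) : ℤ) = (m : ℤ) * c := by
    exact_mod_cast hc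
  rw [mul_assoc, hcast]
  ring

theorem stmt_1 (a : ℤ) (m : ℕ) (hm : 0 < m) :
    (m : ℤ) ∣ (a ^ m - a) * (Nat.factorial (m - 1) : ℤ) := by
  induction a using Int.induction_on with
  | zero => simp [zero_pow hm.ne']
  | succ n ih =>
      have h := step_dvd n m hm
      have := dvd_add h ih
      simpa [sub_mul, add_mul] using this
  | pred n ih =>
      have h := step_dvd (-n - 1) m hm
      have := dvd_sub ih h
      have he : (-(n:ℤ) - 1 + 1) = -n := by ring
      rw [he] at h
      have := dvd_sub ih h
      simpa [sub_mul] using this
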